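/- Fix t ≥ 1 and define the probability measure P̂ by dP̂/dP = exp(−A_t X_t ε_t − (1/2) A_t² X_t²). Then for all real numbers α_1,…,α_t and λ_1,…,λ_t: E_{P̂}[exp{i Σ_{j=1}^{t} α_j X_j + i Σ_{j=1}^{t} λ_j Y_j}] = e^{−λ_t²/2} · E_P[exp{i Σ_{j=1}^{t} α_j X_j + i Σ_{j=1}^{t−1} λ_j Y_j}]. Consequently, under P̂ the joint law of (X_1,…,X_t, Y_1,…,Y_{t−1}) is the same as under P, and Y_t is a standard N(0,1) random variable independent of (X_1,…,X_t, Y_1,…,Y_{t−1}). -/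

import Mathlib

open MeasureTheory ProbabilityTheory Real Finset Complex
open scoped NNReal

/-- The σ-algebra `𝒴_t` generated by the observations `Y 1, …, Y t`. -/
def obsSigma {Ω : Type*} [MeasurableSpace Ω] (Y : ℕ → Ω → ℝ) (t : ℕ) : MeasurableSpace Ω :=
  ⨆ s ∈ Set.Icc 1 t, MeasurableSpace.comap (Y s) inferInstance

/-- `X` is a Gaussian process: every finite linear combination of its values has a
Gaussian distribution. -/
def IsGaussianProcess {Ω : Type*} [MeasurableSpace Ω] (P : Measure Ω) (X : ℕ → Ω → ℝ) : Prop :=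
  ∀ (n : ℕ) (ts : Fin n → ℕ) (c : Fin n → ℝ), ∃ (mg : ℝ) (v : ℝ≥0),
    P.map (fun ω => ∑ i, c i * X (ts i) ω) = gaussianReal mg v


open scoped ENNReal


lemma pdf_shift (c e : ℝ) :
    Real.exp (-(c * e) - c ^ 2 / 2) * gaussianPDFReal 0 1 e = gaussianPDFReal 0 1 (c + e) := by
  simp only [gaussianPDFReal, NNReal.coe_one, mul_one, sub_zero]
  rw [mul_left_comm, ← Real.exp_add]
  congr 2
  ring

lemma integral_gaussianReal_smul {E : Type*} [NormedAddCommGroup E] [NormedSpace ℝ E]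
    (f : ℝ → E) :
    ∫ y, f y ∂(gaussianReal 0 1) = ∫ y, gaussianPDFReal 0 1 y • f y := by
  rw [gaussianReal_of_var_ne_zero 0 one_ne_zero]
  have h : gaussianPDF 0 1 = fun y => ((gaussianPDFReal 0 1 y).toNNReal : ℝ≥0∞) := rfl
  rw [h, integral_withDensity_eq_integral_smul
    ((measurable_gaussianPDFReal 0 1).real_toNNReal) f]
  congr 1
  ext y
  rw [NNReal.smul_def, Real.coe_toNNReal _ (gaussianPDFReal_nonneg _ _ _)]

lemma inner_identity (c : ℝ) (g : ℝ → ℂ) :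
    ∫ e, g (c + e) * (Real.exp (-(c * e) - c ^ 2 / 2) : ℂ) ∂(gaussianReal 0 1)
      = ∫ y, g y ∂(gaussianReal 0 1) := by
  rw [integral_gaussianReal_smul, integral_gaussianReal_smul]
  have h : (fun e => gaussianPDFReal 0 1 e •
      (g (c + e) * (Real.exp (-(c * e) - c ^ 2 / 2) : ℂ)))
      = fun e => (fun y => gaussianPDFReal 0 1 y • g y) (c + e) := by
    ext e
    simp only [real_smul]
    rw [← pdf_shift c e]
    push_cast
    ring
  rw [h]
  exact integral_add_left_eq_self (μ := volume) (fun y => gaussianPDFReal 0 1 y • g y) c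

lemma exp_integral_one (c : ℝ) :
    ∫ e, Real.exp (-(c * e) - c ^ 2 / 2) ∂(gaussianReal 0 1) = 1 := by
  rw [integral_gaussianReal_smul]
  have h : (fun e => gaussianPDFReal 0 1 e • Real.exp (-(c * e) - c ^ 2 / 2))
      = fun e => gaussianPDFReal 0 1 (c + e) := by
    ext e
    rw [smul_eq_mul, mul_comm, pdf_shift]
  rw [h]
  rw [show (∫ e, gaussianPDFReal 0 1 (c + e)) = ∫ e, gaussianPDFReal 0 1 e from
    integral_add_left_eq_self (μ := volume) (gaussianPDFReal 0 1) c]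
  exact integral_gaussianPDFReal_eq_one 0 one_ne_zero

lemma exp_integrable (c : ℝ) :
    Integrable (fun e => Real.exp (-(c * e) - c ^ 2 / 2)) (gaussianReal 0 1) := by
  rw [gaussianReal_of_var_ne_zero 0 one_ne_zero]
  have h : gaussianPDF 0 1 = fun y => ((gaussianPDFReal 0 1 y).toNNReal : ℝ≥0∞) := rfl
  rw [h, integrable_withDensity_iff_integrable_smul
    ((measurable_gaussianPDFReal 0 1).real_toNNReal)]
  have h2 : (fun e => ((gaussianPDFReal 0 1 e).toNNReal : ℝ≥0)
        • Real.exp (-(c * e) - c ^ 2 / 2))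
      = fun e => gaussianPDFReal 0 1 (c + e) := by
    ext e
    rw [NNReal.smul_def, Real.coe_toNNReal _ (gaussianPDFReal_nonneg _ _ _), smul_eq_mul,
      mul_comm, pdf_shift]
  rw [h2]
  have h3 := ((measurePreserving_add_left volume c).integrable_comp_emb
    (MeasurableEquiv.addLeft c).measurableEmbedding).mpr (integrable_gaussianPDFReal 0 1)
  exact h3.congr (Filter.Eventually.of_forall fun e => rfl)

lemma inner_integrable (c : ℝ) {g : ℝ → ℂ} (hg : Measurable g) {M : ℝ} (hM : ∀ y, ‖g y‖ ≤ M) :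
    Integrable (fun e => g (c + e) * (Real.exp (-(c * e) - c ^ 2 / 2) : ℂ))
      (gaussianReal 0 1) := by
  have hsm : AEStronglyMeasurable
      (fun e => g (c + e) * (Real.exp (-(c * e) - c ^ 2 / 2) : ℂ)) (gaussianReal 0 1) := by
    apply Measurable.aestronglyMeasurable
    fun_prop
  refine Integrable.mono' ((exp_integrable c).const_mul M) hsm ?_
  refine Filter.Eventually.of_forall fun e => ?_
  rw [norm_mul, Complex.norm_real, Real.norm_of_nonneg (Real.exp_nonneg _)]
  exact mul_le_mul_of_nonneg_right (hM _) (Real.exp_nonneg _)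

lemma gaussian_charfun (s : ℝ) :
    ∫ y, Complex.exp (Complex.I * ((s * y : ℝ) : ℂ)) ∂(gaussianReal 0 1)
      = Complex.exp (-((s : ℂ)) ^ 2 / 2) := by
  rw [integral_gaussianReal_smul]
  have h : (fun y : ℝ => gaussianPDFReal 0 1 y • Complex.exp (Complex.I * ((s * y : ℝ) : ℂ)))
      = fun y : ℝ => ((Real.sqrt (2 * π) : ℝ) : ℂ)⁻¹ *
        (Complex.exp (Complex.I * (s : ℂ) * (y : ℂ)) *
          Complex.exp (-(1/2 : ℂ) * (y : ℂ) ^ 2)) := by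
    ext y
    simp only [gaussianPDFReal, NNReal.coe_one, mul_one, sub_zero, real_smul]
    push_cast
    ring_nf
  rw [h, integral_const_mul, fourierIntegral_gaussian (by norm_num) (s : ℂ)]
  have h2 : ((π : ℂ) / (1/2)) ^ (1/2 : ℂ) = ((Real.sqrt (2 * π) : ℝ) : ℂ) := by
    rw [show ((π : ℂ) / (1/2)) = ((2 * π : ℝ) : ℂ) by push_cast; ring,
      show ((1 : ℂ)/2) = ((1/2 : ℝ) : ℂ) by norm_num,
      ← Complex.ofReal_cpow (by positivity), ← Real.sqrt_eq_rpow]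
  rw [h2, ← mul_assoc, inv_mul_cancel₀ (by
    simpa using (Real.sqrt_pos.mpr (by positivity : (0:ℝ) < 2 * π)).ne'), one_mul]
  congr 1
  ring

lemma combo {Ω β γ' δ : Type*} [MeasurableSpace Ω] {P : Measure Ω} [IsProbabilityMeasure P]
    [MeasurableSpace β] [MeasurableSpace γ'] [MeasurableSpace δ]
    {f : Ω → β} {g : Ω → γ'} {h : Ω → δ}
    (hf : Measurable f) (hg : Measurable g) (hh : Measurable h)
    (h1 : IndepFun f (fun ω => (g ω, h ω)) P) (h2 : IndepFun g h P) :
    IndepFun (fun ω => (f ω, g ω)) h P := by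
  haveI := Measure.isProbabilityMeasure_map hf.aemeasurable (μ := P)
  haveI := Measure.isProbabilityMeasure_map hg.aemeasurable (μ := P)
  haveI := Measure.isProbabilityMeasure_map hh.aemeasurable (μ := P)
  have hgh : P.map (fun ω => (g ω, h ω)) = (P.map g).prod (P.map h) :=
    (indepFun_iff_map_prod_eq_prod_map_map hg.aemeasurable hh.aemeasurable).mp h2
  have hfg : IndepFun f g P := h1.comp measurable_id measurable_fst
  have hmapfg : P.map (fun ω => (f ω, g ω)) = (P.map f).prod (P.map g) :=
    (indepFun_iff_map_prod_eq_prod_map_map hf.aemeasurable hg.aemeasurable).mp hfg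
  have h3 : P.map (fun ω => (f ω, (g ω, h ω)))
      = (P.map f).prod ((P.map g).prod (P.map h)) := by
    rw [← hgh]
    exact (indepFun_iff_map_prod_eq_prod_map_map hf.aemeasurable
      (hg.prodMk hh).aemeasurable).mp h1
  refine (indepFun_iff_map_prod_eq_prod_map_map
    (hf.prodMk hg).aemeasurable hh.aemeasurable).mpr ?_
  rw [hmapfg]
  have h4 : (fun ω => ((f ω, g ω), h ω))
      = (MeasurableEquiv.prodAssoc.symm : _ × _ × _ → (_ × _) × _)
        ∘ (fun ω => (f ω, (g ω, h ω))) := rfl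
  rw [h4, ← Measure.map_map MeasurableEquiv.prodAssoc.symm.measurable
    (hf.prodMk (hg.prodMk hh)), h3, ← Measure.prodAssoc_prod,
    MeasurableEquiv.map_symm_map]

lemma master {Ω E : Type*} [MeasurableSpace Ω] [MeasurableSpace E]
    (P : Measure Ω) [IsProbabilityMeasure P]
    {W : Ω → E} {e0 : Ω → ℝ} (hW : Measurable W) (he0 : Measurable e0)
    (hInd : IndepFun W e0 P) (hlaw : P.map e0 = gaussianReal 0 1)
    {x : E → ℝ} (hx : Measurable x)
    {F : E → ℂ} {g : ℝ → ℂ} (hF : Measurable F) (hg : Measurable g)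
    {MF Mg : ℝ} (hFb : ∀ w, ‖F w‖ ≤ MF) (hgb : ∀ y, ‖g y‖ ≤ Mg) :
    ∫ ω, F (W ω) * g (x (W ω) + e0 ω) *
        (Real.exp (-(x (W ω) * e0 ω) - x (W ω) ^ 2 / 2) : ℂ) ∂P
      = (∫ w, F w ∂(P.map W)) * ∫ y, g y ∂(gaussianReal 0 1) := by
  have hMg : 0 ≤ Mg := le_trans (norm_nonneg _) (hgb 0)
  haveI : IsProbabilityMeasure (P.map W) := Measure.isProbabilityMeasure_map hW.aemeasurable
  have hpair : P.map (fun ω => (W ω, e0 ω)) = (P.map W).prod (gaussianReal 0 1) := by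
    rw [← hlaw]
    exact (indepFun_iff_map_prod_eq_prod_map_map hW.aemeasurable he0.aemeasurable).mp hInd
  set H : E × ℝ → ℂ := fun p => F p.1 * g (x p.1 + p.2) *
    (Real.exp (-(x p.1 * p.2) - x p.1 ^ 2 / 2) : ℂ) with hH
  have hHmeas : Measurable H := by
    apply Measurable.mul
    · exact (hF.comp measurable_fst).mul
        (hg.comp ((hx.comp measurable_fst).add measurable_snd))
    · exact Complex.measurable_ofReal.comp
        (((((hx.comp measurable_fst).mul measurable_snd).neg).sub
          (((hx.comp measurable_fst).pow_const 2).div_const 2)).exp)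
  have hstep : ∫ ω, F (W ω) * g (x (W ω) + e0 ω) *
        (Real.exp (-(x (W ω) * e0 ω) - x (W ω) ^ 2 / 2) : ℂ) ∂P
      = ∫ p, H p ∂(P.map (fun ω => (W ω, e0 ω))) := by
    rw [integral_map (hW.prodMk he0).aemeasurable hHmeas.aestronglyMeasurable]
  rw [hstep, hpair]
  have hint : Integrable H ((P.map W).prod (gaussianReal 0 1)) := by
    rw [integrable_prod_iff hHmeas.aestronglyMeasurable]
    constructor
    · refine Filter.Eventually.of_forall fun w => ?_
      have h1 := (inner_integrable (x w) hg hgb).const_mul (F w)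
      exact h1.congr (Filter.Eventually.of_forall fun e => by simp [hH, mul_assoc])
    · have hsm : AEStronglyMeasurable
          (fun w => ∫ e, ‖H (w, e)‖ ∂(gaussianReal 0 1)) (P.map W) :=
        (hHmeas.norm.stronglyMeasurable.integral_prod_right').aestronglyMeasurable
      refine Integrable.mono' (integrable_const (|MF| * Mg)) hsm
        (Filter.Eventually.of_forall fun w => ?_)
      rw [Real.norm_of_nonneg (integral_nonneg fun e => norm_nonneg _)]
      have hb : ∀ e : ℝ, ‖H (w, e)‖
          ≤ ‖F w‖ * Mg * Real.exp (-(x w * e) - x w ^ 2 / 2) := by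
        intro e
        simp only [hH, norm_mul, Complex.norm_real,
          Real.norm_of_nonneg (Real.exp_nonneg _)]
        gcongr
        exact hgb _
      calc ∫ e, ‖H (w, e)‖ ∂(gaussianReal 0 1)
          ≤ ∫ e, ‖F w‖ * Mg * Real.exp (-(x w * e) - x w ^ 2 / 2)
            ∂(gaussianReal 0 1) := by
            refine integral_mono_of_nonneg (Filter.Eventually.of_forall fun e => norm_nonneg _)
              ((exp_integrable (x w)).const_mul _) (Filter.Eventually.of_forall hb)
        _ = ‖F w‖ * Mg := by
            rw [integral_const_mul, exp_integral_one, mul_one]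
        _ ≤ |MF| * Mg := by
            gcongr
            exact (hFb w).trans (le_abs_self _)
  rw [MeasureTheory.integral_prod H hint]
  have hinner : ∀ w, (∫ e, H (w, e) ∂(gaussianReal 0 1))
      = F w * ∫ y, g y ∂(gaussianReal 0 1) := by
    intro w
    have h5 : (fun e => H (w, e)) = fun e => F w *
        (g (x w + e) * (Real.exp (-(x w * e) - x w ^ 2 / 2) : ℂ)) := by
      funext e; simp [hH, mul_assoc]
    rw [h5, integral_const_mul, inner_identity]
  simp_rw [hinner]
  rw [integral_mul_const]

lemma masterPhat {Ω E : Type*} [MeasurableSpace Ω] [MeasurableSpace E]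
    (P : Measure Ω) [IsProbabilityMeasure P]
    {W : Ω → E} {e0 : Ω → ℝ} (hW : Measurable W) (he0 : Measurable e0)
    (hInd : IndepFun W e0 P) (hlaw : P.map e0 = gaussianReal 0 1)
    {x : E → ℝ} (hx : Measurable x)
    {F : E → ℂ} {g : ℝ → ℂ} (hF : Measurable F) (hg : Measurable g)
    {MF Mg : ℝ} (hFb : ∀ w, ‖F w‖ ≤ MF) (hgb : ∀ y, ‖g y‖ ≤ Mg) :
    ∫ ω, F (W ω) * g (x (W ω) + e0 ω)
        ∂(P.withDensity fun ω =>
          ENNReal.ofReal (Real.exp (-(x (W ω) * e0 ω) - x (W ω) ^ 2 / 2)))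
      = (∫ w, F w ∂(P.map W)) * ∫ y, g y ∂(gaussianReal 0 1) := by
  have hdm : Measurable (fun ω =>
      (Real.exp (-(x (W ω) * e0 ω) - x (W ω) ^ 2 / 2)).toNNReal) :=
    ((((hx.comp hW).mul he0).neg.sub
      (((hx.comp hW).pow_const 2).div_const 2)).exp).real_toNNReal
  have hd : (fun ω => ENNReal.ofReal (Real.exp (-(x (W ω) * e0 ω) - x (W ω) ^ 2 / 2)))
      = fun ω => (((Real.exp (-(x (W ω) * e0 ω) - x (W ω) ^ 2 / 2)).toNNReal : ℝ≥0) :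
        ℝ≥0∞) := rfl
  rw [hd, integral_withDensity_eq_integral_smul hdm]
  have hpt : ∀ ω, ((Real.exp (-(x (W ω) * e0 ω) - x (W ω) ^ 2 / 2)).toNNReal : ℝ≥0)
        • (F (W ω) * g (x (W ω) + e0 ω))
      = F (W ω) * g (x (W ω) + e0 ω) *
        (Real.exp (-(x (W ω) * e0 ω) - x (W ω) ^ 2 / 2) : ℂ) := by
    intro ω
    rw [NNReal.smul_def, Real.coe_toNNReal _ (Real.exp_nonneg _), real_smul]
    ring
  simp_rw [hpt]
  exact master P hW he0 hInd hlaw hx hF hg hFb hgb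

theorem measure_change_characteristic_function
    {Ω : Type*} [MeasurableSpace Ω] (P : Measure Ω) [IsProbabilityMeasure P]
    (X ε Y : ℕ → Ω → ℝ) (A m : ℕ → ℝ) (K : ℕ → ℕ → ℝ) (t : ℕ) (ht : 1 ≤ t)
    (hXmeas : ∀ t, Measurable (X t)) (hεmeas : ∀ t, Measurable (ε t))
    (hXgauss : IsGaussianProcess P X)
    (hm : ∀ t, ∫ ω, X t ω ∂P = m t)
    (hK : ∀ t s, ∫ ω, (X t ω - m t) * (X s ω - m s) ∂P = K t s)
    (hεlaw : ∀ t, P.map (ε t) = gaussianReal 0 1)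
    (hεindep : iIndepFun ε P)
    (hXε : IndepFun (fun ω => fun t => X t ω) (fun ω => fun t => ε t ω) P)
    (hY : ∀ t ω, Y t ω = A t * X t ω + ε t ω)
    -- the new probability measure `P̂`
    (Phat : Measure Ω)
    (hPhat : Phat = P.withDensity (fun ω =>
      ENNReal.ofReal (Real.exp (-(A t * X t ω * ε t ω) - 1 / 2 * A t ^ 2 * X t ω ^ 2)))) :
    (∀ α lam : ℕ → ℝ,
      ∫ ω, Complex.exp (Complex.I *
          ((↑(∑ j ∈ Finset.Icc 1 t, α j * X j ω + ∑ j ∈ Finset.Icc 1 t, lam j * Y j ω)) : ℂ))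
        ∂Phat
      = Complex.exp (-(((lam t : ℝ)) ^ 2 : ℝ) / 2) *
        ∫ ω, Complex.exp (Complex.I *
          ((↑(∑ j ∈ Finset.Icc 1 t, α j * X j ω
              + ∑ j ∈ Finset.Icc 1 (t - 1), lam j * Y j ω)) : ℂ)) ∂P) ∧
    Phat.map (fun ω =>
        ((fun j : Fin t => X (j.1 + 1) ω), (fun j : Fin (t - 1) => Y (j.1 + 1) ω)))
      = P.map (fun ω =>
        ((fun j : Fin t => X (j.1 + 1) ω), (fun j : Fin (t - 1) => Y (j.1 + 1) ω))) ∧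
    Phat.map (Y t) = gaussianReal 0 1 ∧
    IndepFun (fun ω =>
        ((fun j : Fin t => X (j.1 + 1) ω), (fun j : Fin (t - 1) => Y (j.1 + 1) ω)))
      (Y t) Phat := by
  classical
  have hYmeas : ∀ s, Measurable (Y s) := fun s => by
    have h : Y s = fun ω => A s * X s ω + ε s ω := funext (hY s)
    rw [h]; exact ((hXmeas s).const_mul _).add (hεmeas s)
  set V : Ω → (Fin t → ℝ) × (Fin (t - 1) → ℝ) := fun ω =>
    ((fun j : Fin t => X (j.1 + 1) ω), (fun j : Fin (t - 1) => Y (j.1 + 1) ω)) with hVdef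
  set W : Ω → (Fin t → ℝ) × (Fin (t - 1) → ℝ) := fun ω =>
    ((fun j : Fin t => X (j.1 + 1) ω), (fun j : Fin (t - 1) => ε (j.1 + 1) ω)) with hWdef
  set Φ : (Fin t → ℝ) × (Fin (t - 1) → ℝ) → (Fin t → ℝ) × (Fin (t - 1) → ℝ) := fun w =>
    (w.1, fun j : Fin (t - 1) => A (j.1 + 1) * w.1 ⟨j.1, by omega⟩ + w.2 j) with hΦdef
  set x : (Fin t → ℝ) × (Fin (t - 1) → ℝ) → ℝ := fun w =>
    A t * w.1 ⟨t - 1, by omega⟩ with hxdef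
  have hWmeas : Measurable W :=
    Measurable.prodMk (measurable_pi_lambda _ fun j => hXmeas _)
      (measurable_pi_lambda _ fun j => hεmeas _)
  have hxmeas : Measurable x :=
    (measurable_const.mul ((measurable_pi_apply _).comp measurable_fst))
  have hΦmeas : Measurable Φ :=
    measurable_fst.prodMk (measurable_pi_lambda _ fun j =>
      ((measurable_const.mul ((measurable_pi_apply _).comp measurable_fst)).add
        ((measurable_pi_apply j).comp measurable_snd)))
  have hVeq : V = Φ ∘ W := by
    funext ω
    refine Prod.ext rfl ?_
    funext j
    exact hY (j.1 + 1) ω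
  have hVmeas : Measurable V := by rw [hVeq]; exact hΦmeas.comp hWmeas
  have hΦW : ∀ ω, Φ (W ω) = V ω := fun ω => (congrFun hVeq ω).symm
  have h11 : t - 1 + 1 = t := by omega
  have hxW : ∀ ω, x (W ω) = A t * X t ω := by
    intro ω
    show A t * X (t - 1 + 1) ω = A t * X t ω
    rw [h11]
  have hYt : ∀ ω, Y t ω = x (W ω) + ε t ω := fun ω => by rw [hY, hxW]
  -- independence of W and ε t
  have hε' : IndepFun (fun ω => fun j : Fin (t - 1) => ε (j.1 + 1) ω) (ε t) P := by
    have hdisj : Disjoint (Finset.Icc 1 (t - 1)) ({t} : Finset ℕ) := by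
      simp only [Finset.disjoint_singleton_right, Finset.mem_Icc]
      omega
    have hbase := hεindep.indepFun_finset (Finset.Icc 1 (t - 1)) {t} hdisj hεmeas
    have hφ : Measurable (fun v : (Finset.Icc 1 (t - 1) : Finset ℕ) → ℝ =>
        fun j : Fin (t - 1) =>
          v ⟨j.1 + 1, Finset.mem_Icc.mpr ⟨by omega, by omega⟩⟩) :=
      measurable_pi_lambda _ fun j => measurable_pi_apply _
    have hψ : Measurable (fun v : (({t} : Finset ℕ) : Finset ℕ) → ℝ =>
        v ⟨t, Finset.mem_singleton_self t⟩) := measurable_pi_apply _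
    exact hbase.comp hφ hψ
  have hXpair : IndepFun (fun ω => fun j : Fin t => X (j.1 + 1) ω)
      (fun ω => ((fun j : Fin (t - 1) => ε (j.1 + 1) ω), ε t ω)) P := by
    have hφ : Measurable (fun v : ℕ → ℝ => fun j : Fin t => v (j.1 + 1)) :=
      measurable_pi_lambda _ fun j => measurable_pi_apply _
    have hψ : Measurable (fun v : ℕ → ℝ =>
        ((fun j : Fin (t - 1) => v (j.1 + 1)), v t)) :=
      (measurable_pi_lambda _ fun j => measurable_pi_apply _).prodMk (measurable_pi_apply _)
    exact hXε.comp hφ hψ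
  have hInd : IndepFun W (ε t) P :=
    combo (measurable_pi_lambda _ fun j => hXmeas _)
      (measurable_pi_lambda _ fun j => hεmeas _) (hεmeas t) hXpair hε'
  -- rewrite Phat
  have hPhat' : Phat = P.withDensity fun ω =>
      ENNReal.ofReal (Real.exp (-(x (W ω) * ε t ω) - x (W ω) ^ 2 / 2)) := by
    rw [hPhat]
    congr 1
    funext ω
    congr 1
    rw [hxW ω]
    ring_nf
  haveI hμprob : IsProbabilityMeasure (P.map W) :=
    Measure.isProbabilityMeasure_map hWmeas.aemeasurable
  -- the master identity for Phat
  have key : ∀ (F : (Fin t → ℝ) × (Fin (t - 1) → ℝ) → ℂ) (g : ℝ → ℂ),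
      Measurable F → Measurable g → (∀ w, ‖F w‖ ≤ 1) → (∀ y, ‖g y‖ ≤ 1) →
      ∫ ω, F (W ω) * g (Y t ω) ∂Phat
        = (∫ w, F w ∂(P.map W)) * ∫ y, g y ∂(gaussianReal 0 1) := by
    intro F g hF hg hFb hgb
    have hpt : (fun ω => F (W ω) * g (Y t ω))
        = fun ω => F (W ω) * g (x (W ω) + ε t ω) := by
      funext ω; rw [hYt]
    rw [hpt, hPhat']
    exact masterPhat P hWmeas (hεmeas t) hInd (hεlaw t) hxmeas hF hg hFb hgb
  -- Phat is a probability measure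
  have hDc : ∫ ω, ((Real.exp (-(x (W ω) * ε t ω) - x (W ω) ^ 2 / 2) : ℝ) : ℂ) ∂P
      = 1 := by
    have h := master P hWmeas (hεmeas t) hInd (hεlaw t) hxmeas
      (F := fun _ => 1) (g := fun _ => 1) measurable_const measurable_const
      (MF := 1) (Mg := 1) (by simp) (by simp)
    simpa using h
  have hDintC : Integrable
      (fun ω => ((Real.exp (-(x (W ω) * ε t ω) - x (W ω) ^ 2 / 2) : ℝ) : ℂ)) P := by
    by_contra hc
    rw [integral_undef hc] at hDc
    simp at hDc
  have hDint : Integrable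
      (fun ω => Real.exp (-(x (W ω) * ε t ω) - x (W ω) ^ 2 / 2)) P := by
    have h2 := hDintC.re
    exact h2.congr (Filter.Eventually.of_forall fun ω => by
      simp only [RCLike.re_to_complex, Complex.ofReal_re])
  have hDreal : ∫ ω, Real.exp (-(x (W ω) * ε t ω) - x (W ω) ^ 2 / 2) ∂P = 1 := by
    have h3 := integral_re hDintC
    rw [hDc] at h3
    simpa only [RCLike.re_to_complex, Complex.ofReal_re, Complex.one_re] using h3
  haveI hPhatProb : IsProbabilityMeasure Phat := by
    constructor
    rw [hPhat', withDensity_apply _ MeasurableSet.univ, setLIntegral_univ,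
      ← ofReal_integral_eq_lintegral_ofReal hDint
        (Filter.Eventually.of_forall fun ω => Real.exp_nonneg _),
      hDreal, ENNReal.ofReal_one]
  haveI : IsProbabilityMeasure (Phat.map W) :=
    Measure.isProbabilityMeasure_map hWmeas.aemeasurable
  haveI : IsProbabilityMeasure (Phat.map V) :=
    Measure.isProbabilityMeasure_map hVmeas.aemeasurable
  haveI : IsProbabilityMeasure (P.map V) :=
    Measure.isProbabilityMeasure_map hVmeas.aemeasurable
  haveI : IsProbabilityMeasure (Phat.map (Y t)) :=
    Measure.isProbabilityMeasure_map (hYmeas t).aemeasurable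
  have hindnorm : ∀ (s : Set ((Fin t → ℝ) × (Fin (t - 1) → ℝ))) (w),
      ‖s.indicator (fun _ => (1 : ℂ)) w‖ ≤ 1 := by
    intro s w
    by_cases h : w ∈ s <;> simp [Set.indicator_of_mem, Set.indicator_of_notMem, h]
  have hindnormR : ∀ (s : Set ℝ) (w), ‖s.indicator (fun _ => (1 : ℂ)) w‖ ≤ 1 := by
    intro s w
    by_cases h : w ∈ s <;> simp [Set.indicator_of_mem, Set.indicator_of_notMem, h]
  -- law of W is unchanged
  have hWlaw : Phat.map W = P.map W := by
    refine Measure.ext fun s hs => ?_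
    have hk := key (s.indicator fun _ => (1 : ℂ)) (fun _ => 1)
      (measurable_const.indicator hs) measurable_const (hindnorm s) (by simp)
    have lmap : ∫ ω, (s.indicator fun _ => (1 : ℂ)) (W ω) ∂Phat
        = ∫ w, (s.indicator fun _ => (1 : ℂ)) w ∂(Phat.map W) :=
      (integral_map hWmeas.aemeasurable
        (measurable_const.indicator hs).aestronglyMeasurable).symm
    simp only [mul_one] at hk
    rw [lmap] at hk
    simp only [integral_indicator_const (1 : ℂ) hs, integral_const, measure_univ,
      ENNReal.toReal_one, one_smul, smul_eq_mul, Complex.real_smul, mul_one, measureReal_def] at hk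
    exact (ENNReal.toReal_eq_toReal_iff' (measure_ne_top _ _) (measure_ne_top _ _)).mp
      (by exact_mod_cast hk)
  -- conclusion 2
  have hVlaw : Phat.map V = P.map V := by
    rw [hVeq, ← Measure.map_map hΦmeas hWmeas, hWlaw, Measure.map_map hΦmeas hWmeas]
  -- conclusion 3
  have hYtlaw : Phat.map (Y t) = gaussianReal 0 1 := by
    refine Measure.ext fun s hs => ?_
    have hk := key (fun _ => 1) (s.indicator fun _ => (1 : ℂ))
      measurable_const (measurable_const.indicator hs) (by simp) (hindnormR s)
    have lmap : ∫ ω, (s.indicator fun _ => (1 : ℂ)) (Y t ω) ∂Phat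
        = ∫ y, (s.indicator fun _ => (1 : ℂ)) y ∂(Phat.map (Y t)) :=
      (integral_map (hYmeas t).aemeasurable
        (measurable_const.indicator hs).aestronglyMeasurable).symm
    simp only [one_mul, integral_const, measure_univ, ENNReal.toReal_one, one_smul] at hk
    rw [lmap] at hk
    simp only [integral_indicator_const (1 : ℂ) hs, integral_const, measure_univ,
      ENNReal.toReal_one, one_smul, smul_eq_mul, Complex.real_smul, mul_one, one_mul,
        measureReal_def] at hk
    exact (ENNReal.toReal_eq_toReal_iff' (measure_ne_top _ _) (measure_ne_top _ _)).mp
      (by exact_mod_cast hk)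
  -- conclusion 4
  have hindep : IndepFun V (Y t) Phat := by
    rw [indepFun_iff_measure_inter_preimage_eq_mul]
    intro s c hs hc
    have hk := key ((Φ ⁻¹' s).indicator fun _ => (1 : ℂ))
      (c.indicator fun _ => (1 : ℂ))
      (measurable_const.indicator (hΦmeas hs)) (measurable_const.indicator hc)
      (hindnorm _) (hindnormR c)
    have hlhs : (fun ω => (Φ ⁻¹' s).indicator (fun _ => (1 : ℂ)) (W ω) *
        c.indicator (fun _ => (1 : ℂ)) (Y t ω))
        = fun ω => (V ⁻¹' s ∩ Y t ⁻¹' c).indicator (fun _ => (1 : ℂ)) ω := by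
      funext ω
      by_cases h1 : V ω ∈ s <;> by_cases h2 : Y t ω ∈ c <;>
        simp [Set.indicator_apply, Set.mem_preimage, hΦW ω, h1, h2]
    rw [hlhs, integral_indicator_const (1 : ℂ)
      ((hVmeas hs).inter ((hYmeas t) hc))] at hk
    have hr1 : ∫ w, (Φ ⁻¹' s).indicator (fun _ => (1 : ℂ)) w ∂(P.map W)
        = ((Phat (V ⁻¹' s) : ℝ≥0∞).toReal : ℂ) := by
      rw [integral_indicator_const (1 : ℂ) (hΦmeas hs)]
      have : (P.map W) (Φ ⁻¹' s) = Phat (V ⁻¹' s) := by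
        rw [← Measure.map_apply hΦmeas hs, Measure.map_map hΦmeas hWmeas, ← hVeq,
          ← hVlaw, Measure.map_apply hVmeas hs]
      rw [measureReal_def, this]
      simp [smul_eq_mul]
    have hr2 : ∫ y, c.indicator (fun _ => (1 : ℂ)) y ∂(gaussianReal 0 1)
        = ((Phat (Y t ⁻¹' c) : ℝ≥0∞).toReal : ℂ) := by
      rw [integral_indicator_const (1 : ℂ) hc, ← hYtlaw, measureReal_def,
        Measure.map_apply (hYmeas t) hc]
      simp [smul_eq_mul]
    rw [hr1, hr2] at hk
    have hk' : ((Phat (V ⁻¹' s ∩ Y t ⁻¹' c)).toReal : ℂ)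
        = ((Phat (V ⁻¹' s)).toReal * (Phat (Y t ⁻¹' c)).toReal : ℝ) := by
      simpa [smul_eq_mul, measureReal_def] using hk
    have hk'' : (Phat (V ⁻¹' s ∩ Y t ⁻¹' c)).toReal
        = ((Phat (V ⁻¹' s)) * (Phat (Y t ⁻¹' c))).toReal := by
      rw [ENNReal.toReal_mul]
      exact_mod_cast hk'
    exact (ENNReal.toReal_eq_toReal_iff' (measure_ne_top _ _)
      (ENNReal.mul_ne_top (measure_ne_top _ _) (measure_ne_top _ _))).mp hk''
  refine ⟨?_, hVlaw, hYtlaw, hindep⟩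
  -- conclusion 1
  intro α lam
  set xc : (Fin t → ℝ) × (Fin (t - 1) → ℝ) → ℕ → ℝ := fun w j =>
    if h : j - 1 < t then w.1 ⟨j - 1, h⟩ else 0 with hxcdef
  set ec : (Fin t → ℝ) × (Fin (t - 1) → ℝ) → ℕ → ℝ := fun w j =>
    if h : j - 1 < t - 1 then w.2 ⟨j - 1, h⟩ else 0 with hecdef
  have hxcmeas : ∀ j, Measurable fun w => xc w j := by
    intro j
    by_cases h : j - 1 < t
    · simp only [hxcdef, dif_pos h]
      exact (measurable_pi_apply _).comp measurable_fst
    · simp only [hxcdef, dif_neg h]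
      exact measurable_const
  have hecmeas : ∀ j, Measurable fun w => ec w j := by
    intro j
    by_cases h : j - 1 < t - 1
    · simp only [hecdef, dif_pos h]
      exact (measurable_pi_apply _).comp measurable_snd
    · simp only [hecdef, dif_neg h]
      exact measurable_const
  set F : (Fin t → ℝ) × (Fin (t - 1) → ℝ) → ℂ := fun w =>
    Complex.exp (Complex.I * ((↑(∑ j ∈ Finset.Icc 1 t, α j * xc w j
      + ∑ j ∈ Finset.Icc 1 (t - 1), lam j * (A j * xc w j + ec w j))) : ℂ)) with hFdef
  set g : ℝ → ℂ := fun y => Complex.exp (Complex.I * ((↑(lam t * y)) : ℂ)) with hgdef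
  have hnorm1 : ∀ r : ℝ, ‖Complex.exp (Complex.I * (r : ℂ))‖ = 1 := by
    intro r
    rw [Complex.norm_exp]
    simp
  have hFmeas : Measurable F := by
    apply Complex.measurable_exp.comp
    apply measurable_const.mul
    apply Complex.measurable_ofReal.comp
    exact (Finset.measurable_sum _ fun j _ => (hxcmeas j).const_mul _).add
      (Finset.measurable_sum _ fun j _ =>
        (((hxcmeas j).const_mul _).add (hecmeas j)).const_mul _)
  have hgmeas : Measurable g := by
    apply Complex.measurable_exp.comp
    apply measurable_const.mul
    exact Complex.measurable_ofReal.comp (measurable_id.const_mul _)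
  have hFW : ∀ ω, F (W ω) = Complex.exp (Complex.I *
      ((↑(∑ j ∈ Finset.Icc 1 t, α j * X j ω
        + ∑ j ∈ Finset.Icc 1 (t - 1), lam j * Y j ω)) : ℂ)) := by
    intro ω
    have hxcW : ∀ j ∈ Finset.Icc 1 t, xc (W ω) j = X j ω := by
      intro j hj
      rw [Finset.mem_Icc] at hj
      have hlt : j - 1 < t := by omega
      simp only [hxcdef, dif_pos hlt]
      show X (j - 1 + 1) ω = X j ω
      congr 1
      omega
    have hecW : ∀ j ∈ Finset.Icc 1 (t - 1), ec (W ω) j = ε j ω := by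
      intro j hj
      rw [Finset.mem_Icc] at hj
      have hlt : j - 1 < t - 1 := by omega
      simp only [hecdef, dif_pos hlt]
      show ε (j - 1 + 1) ω = ε j ω
      congr 1
      omega
    have hs1 : ∑ j ∈ Finset.Icc 1 t, α j * xc (W ω) j
        = ∑ j ∈ Finset.Icc 1 t, α j * X j ω :=
      Finset.sum_congr rfl fun j hj => by rw [hxcW j hj]
    have hs2 : ∑ j ∈ Finset.Icc 1 (t - 1), lam j * (A j * xc (W ω) j + ec (W ω) j)
        = ∑ j ∈ Finset.Icc 1 (t - 1), lam j * Y j ω := by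
      refine Finset.sum_congr rfl fun j hj => ?_
      have hj' : j ∈ Finset.Icc 1 t := by
        rw [Finset.mem_Icc] at hj ⊢
        omega
      rw [hxcW j hj', hecW j hj, ← hY]
    simp only [hFdef, hs1, hs2]
  have hsplit : ∀ ω, ∑ j ∈ Finset.Icc 1 t, lam j * Y j ω
      = ∑ j ∈ Finset.Icc 1 (t - 1), lam j * Y j ω + lam t * Y t ω := by
    intro ω
    have hins : Finset.Icc 1 t = insert t (Finset.Icc 1 (t - 1)) := by
      ext j
      simp only [Finset.mem_Icc, Finset.mem_insert]
      omega
    rw [hins, Finset.sum_insert (by simp only [Finset.mem_Icc]; omega), add_comm]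
  have hintegrand : ∀ ω, Complex.exp (Complex.I *
      ((↑(∑ j ∈ Finset.Icc 1 t, α j * X j ω + ∑ j ∈ Finset.Icc 1 t, lam j * Y j ω)) : ℂ))
      = F (W ω) * g (Y t ω) := by
    intro ω
    rw [hFW, hgdef, ← Complex.exp_add, hsplit ω]
    congr 1
    push_cast
    ring
  have hgval : ∫ y, g y ∂(gaussianReal 0 1)
      = Complex.exp (-(((lam t : ℝ)) ^ 2 : ℝ) / 2) := by
    rw [hgdef]
    rw [gaussian_charfun (lam t)]
    congr 1
    push_cast
    ring
  have hFint : ∫ w, F w ∂(P.map W) = ∫ ω, Complex.exp (Complex.I *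
      ((↑(∑ j ∈ Finset.Icc 1 t, α j * X j ω
        + ∑ j ∈ Finset.Icc 1 (t - 1), lam j * Y j ω)) : ℂ)) ∂P := by
    rw [integral_map hWmeas.aemeasurable hFmeas.aestronglyMeasurable]
    exact integral_congr_ae (Filter.Eventually.of_forall hFW)
  calc ∫ ω, Complex.exp (Complex.I *
      ((↑(∑ j ∈ Finset.Icc 1 t, α j * X j ω + ∑ j ∈ Finset.Icc 1 t, lam j * Y j ω)) : ℂ))
        ∂Phat
      = ∫ ω, F (W ω) * g (Y t ω) ∂Phat :=
        integral_congr_ae (Filter.Eventually.of_forall hintegrand)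
    _ = (∫ w, F w ∂(P.map W)) * ∫ y, g y ∂(gaussianReal 0 1) :=
        key F g hFmeas hgmeas (fun w => le_of_eq (hnorm1 _)) (fun y => le_of_eq (hnorm1 _))
    _ = Complex.exp (-(((lam t : ℝ)) ^ 2 : ℝ) / 2) *
        ∫ ω, Complex.exp (Complex.I *
          ((↑(∑ j ∈ Finset.Icc 1 t, α j * X j ω
              + ∑ j ∈ Finset.Icc 1 (t - 1), lam j * Y j ω)) : ℂ)) ∂P := by
        rw [hgval, hFint, mul_comm]
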